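/- Stream partial derivatives agree with classical partial derivatives at the initial point: let K be a field of characteristic 0 and p a polynomial in the variables x, y₁, ..., yₙ with coefficients in K. Then there exist polynomials q₀, q₁, ..., qₙ in the variables x, y₀₁,...,y₀ₙ, y₁,...,yₙ with coefficients in K such that (i) for every tuple of streams σ over K, writing r₀ = (σ₁(0),...,σₙ(0)), one has (p(X, σ))' = q₀(X, r₀, σ) + Σᵢ₌₁ⁿ qᵢ(X, r₀, σ) · σᵢ'; and (ii) for every r₀ ∈ Kⁿ and every i = 1,...,n, qᵢ(0, r₀, r₀) = (∂p/∂yᵢ)(0, r₀), where ∂p/∂yᵢ is the formal partial derivative of p with respect to yᵢ. -/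

import Mathlib

/-- Stream derivative: remove the first coefficient. -/
noncomputable def sderiv {K : Type*} [Field K] (σ : PowerSeries K) : PowerSeries K :=
  PowerSeries.mk fun k => PowerSeries.coeff (k + 1) σ

/-- Variable set `x, y₀₁,...,y₀ₙ, y₁,...,yₙ`. -/
abbrev VarV (n : ℕ) := Unit ⊕ (Fin n ⊕ Fin n)

/-- Evaluation of a polynomial in `x, y₁, ..., yₙ` (variable `0` playing the role of `x`)
at `x := X` and `yᵢ := σᵢ`. -/
noncomputable def polyEval {K : Type*} [Field K] {n : ℕ}
    (p : MvPolynomial (Fin (n + 1)) K) (σ : Fin n → PowerSeries K) : PowerSeries K :=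
  MvPolynomial.aeval (Fin.cons PowerSeries.X σ) p

/-- Evaluation of a polynomial in `x, y₀, y` at `x := X`, `y₀ᵢ := C r₀ᵢ`, `yᵢ := σᵢ`. -/
noncomputable def evalV {K : Type*} [Field K] {n : ℕ}
    (q : MvPolynomial (VarV n) K) (r0 : Fin n → K) (σ : Fin n → PowerSeries K) :
    PowerSeries K :=
  MvPolynomial.aeval
    (Sum.elim (fun _ => PowerSeries.X)
      (Sum.elim (fun i => PowerSeries.C (r0 i)) σ)) q

/-- Evaluation of a polynomial in `x, y₀, y` at `x := 0`, `y₀ᵢ := r₀ᵢ`, `yᵢ := r₀ᵢ`. -/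
noncomputable def evalVK {K : Type*} [Field K] {n : ℕ}
    (q : MvPolynomial (VarV n) K) (r0 : Fin n → K) : K :=
  MvPolynomial.eval (Sum.elim (fun _ => (0 : K)) (Sum.elim r0 r0)) q

section Aux

open MvPolynomial

variable {K : Type*} [Field K] {n : ℕ}

lemma X_mul_sderiv (σ : PowerSeries K) :
    PowerSeries.X * sderiv σ + PowerSeries.C (PowerSeries.coeff 0 σ) = σ := by
  ext k
  cases k with
  | zero => simp [PowerSeries.coeff_zero_eq_constantCoeff]
  | succ k => simp [PowerSeries.coeff_succ_X_mul, sderiv, PowerSeries.coeff_C]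

lemma sderiv_mul (σ τ : PowerSeries K) :
    sderiv (σ * τ) = sderiv σ * τ + PowerSeries.C (PowerSeries.coeff 0 σ) * sderiv τ := by
  have hX : (PowerSeries.X : PowerSeries K) ≠ 0 := PowerSeries.X_ne_zero
  apply mul_left_cancel₀ hX
  have h1 := X_mul_sderiv σ
  have h2 := X_mul_sderiv τ
  have h3 := X_mul_sderiv (σ * τ)
  have h0 : PowerSeries.coeff 0 (σ * τ) = PowerSeries.coeff 0 σ * PowerSeries.coeff 0 τ := by
    simp [PowerSeries.coeff_zero_eq_constantCoeff, map_mul]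
  have : PowerSeries.X * sderiv (σ * τ) = σ * τ - PowerSeries.C (PowerSeries.coeff 0 σ * PowerSeries.coeff 0 τ) := by
    rw [← h0]; linear_combination h3
  rw [this]
  have hσ : PowerSeries.X * sderiv σ = σ - PowerSeries.C (PowerSeries.coeff 0 σ) := by linear_combination h1
  have hτ : PowerSeries.X * sderiv τ = τ - PowerSeries.C (PowerSeries.coeff 0 τ) := by linear_combination h2
  rw [mul_add, ← mul_assoc, hσ, mul_left_comm, hτ]
  push_cast [map_mul]
  ring

lemma sderiv_add (σ τ : PowerSeries K) :
    sderiv (σ + τ) = sderiv σ + sderiv τ := by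
  ext k; simp [sderiv]

lemma sderiv_C (a : K) : sderiv (PowerSeries.C a) = 0 := by
  ext k; simp [sderiv, PowerSeries.coeff_C]

lemma sderiv_X : sderiv (PowerSeries.X : PowerSeries K) = 1 := by
  ext k; simp [sderiv, PowerSeries.coeff_X, PowerSeries.coeff_one]

/-- image of `p` with `x ↦ 0` and `yᵢ ↦ y₀ᵢ`. -/
noncomputable def pZero (p : MvPolynomial (Fin (n + 1)) K) : MvPolynomial (VarV n) K :=
  MvPolynomial.aeval (Fin.cons 0 (fun i => MvPolynomial.X (Sum.inr (Sum.inl i)))) p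

lemma constCoeff_polyEval (p : MvPolynomial (Fin (n + 1)) K) (σ : Fin n → PowerSeries K) :
    PowerSeries.constantCoeff (polyEval p σ) =
      eval (Fin.cons 0 fun i => PowerSeries.coeff 0 (σ i)) p := by
  rw [polyEval, map_aeval, eval]
  apply MvPolynomial.eval₂Hom_congr ?_ ?_ rfl
  · ext a
    show PowerSeries.constantCoeff (PowerSeries.C a) = a
    simp
  · funext j
    refine Fin.cases ?_ (fun i => ?_) j <;>
      simp [PowerSeries.coeff_zero_eq_constantCoeff]

lemma evalV_pZero (p : MvPolynomial (Fin (n + 1)) K) (r0 : Fin n → K)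
    (σ : Fin n → PowerSeries K) :
    evalV (pZero p) r0 σ = PowerSeries.C (eval (Fin.cons 0 r0) p) := by
  rw [evalV, pZero, comp_aeval_apply]
  have hC : (PowerSeries.C : K →+* PowerSeries K) = algebraMap K (PowerSeries K) := rfl
  rw [show (PowerSeries.C (eval (Fin.cons 0 r0) p)) =
      (Algebra.ofId K (PowerSeries K)) (eval (Fin.cons 0 r0) p) from rfl]
  rw [show (eval (Fin.cons 0 r0) p : K) = aeval (Fin.cons 0 r0) p from by
    rw [← coe_aeval_eq_eval]; rfl]
  rw [comp_aeval_apply]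
  have hf : (fun j => (aeval (Sum.elim (fun _ => (PowerSeries.X : PowerSeries K))
      (Sum.elim (fun i => PowerSeries.C (r0 i)) σ)))
        ((Fin.cons 0 (fun i => MvPolynomial.X (Sum.inr (Sum.inl i))) :
          Fin (n+1) → MvPolynomial (VarV n) K) j)) =
      (fun j => (Algebra.ofId K (PowerSeries K)) ((Fin.cons 0 r0 : Fin (n+1) → K) j)) := by
    funext j
    refine Fin.cases ?_ (fun i => ?_) j <;> simp [Algebra.ofId_apply, ← hC]
  rw [hf]

lemma evalVK_pZero (p : MvPolynomial (Fin (n + 1)) K) (r0 : Fin n → K) :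
    evalVK (pZero p) r0 = eval (Fin.cons 0 r0) p := by
  rw [evalVK, pZero, map_aeval, eval]
  apply MvPolynomial.eval₂Hom_congr ?_ ?_ rfl
  · ext a; simp
  · funext j
    refine Fin.cases ?_ (fun i => ?_) j <;> simp

variable (r0 : Fin n → K) (σ : Fin n → PowerSeries K)

@[simp] lemma evalV_add (a b : MvPolynomial (VarV n) K) :
    evalV (a + b) r0 σ = evalV a r0 σ + evalV b r0 σ := by simp [evalV]

@[simp] lemma evalV_mul (a b : MvPolynomial (VarV n) K) :
    evalV (a * b) r0 σ = evalV a r0 σ * evalV b r0 σ := by simp [evalV]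

@[simp] lemma evalV_zero : evalV (0 : MvPolynomial (VarV n) K) r0 σ = 0 := by simp [evalV]

@[simp] lemma evalV_Xx :
    evalV (MvPolynomial.X (Sum.inl ()) : MvPolynomial (VarV n) K) r0 σ = PowerSeries.X := by
  simp [evalV]

@[simp] lemma evalV_Xy (i : Fin n) :
    evalV (MvPolynomial.X (Sum.inr (Sum.inr i)) : MvPolynomial (VarV n) K) r0 σ = σ i := by
  simp [evalV]

@[simp] lemma evalVK_add (a b : MvPolynomial (VarV n) K) :
    evalVK (a + b) r0 = evalVK a r0 + evalVK b r0 := by simp [evalVK]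

@[simp] lemma evalVK_mul (a b : MvPolynomial (VarV n) K) :
    evalVK (a * b) r0 = evalVK a r0 * evalVK b r0 := by simp [evalVK]

@[simp] lemma evalVK_zero : evalVK (0 : MvPolynomial (VarV n) K) r0 = 0 := by simp [evalVK]

@[simp] lemma evalVK_Xx :
    evalVK (MvPolynomial.X (Sum.inl ()) : MvPolynomial (VarV n) K) r0 = 0 := by simp [evalVK]

@[simp] lemma evalVK_Xy (i : Fin n) :
    evalVK (MvPolynomial.X (Sum.inr (Sum.inr i)) : MvPolynomial (VarV n) K) r0 = r0 i := by
  simp [evalVK]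

end Aux

open PowerSeries MvPolynomial in
/-- Stream partial derivatives agree with classical partial derivatives at the
initial point. -/
theorem stream_partial_deriv_agrees_classical {K : Type*} [Field K] [CharZero K] {n : ℕ}
    (p : MvPolynomial (Fin (n + 1)) K) :
    ∃ (q0 : MvPolynomial (VarV n) K) (q : Fin n → MvPolynomial (VarV n) K),
      (∀ σ : Fin n → PowerSeries K,
        sderiv (polyEval p σ) =
          evalV q0 (fun i => PowerSeries.coeff 0 (σ i)) σ +
          ∑ i, evalV (q i) (fun j => PowerSeries.coeff 0 (σ j)) σ * sderiv (σ i)) ∧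
      (∀ (r0 : Fin n → K) (i : Fin n),
        evalVK (q i) r0 =
          MvPolynomial.eval (Fin.cons 0 r0) (MvPolynomial.pderiv i.succ p)) := by
  induction p using MvPolynomial.induction_on with
  | C a =>
    refine ⟨0, fun _ => 0, fun σ => ?_, fun r0 i => ?_⟩
    · have : polyEval (MvPolynomial.C a : MvPolynomial (Fin (n+1)) K) σ = PowerSeries.C a := by
        simp [polyEval]
      simp [this, sderiv_C]
    · simp
  | add p p' ih ih' =>
    obtain ⟨q0, q, h1, h2⟩ := ih
    obtain ⟨q0', q', h1', h2'⟩ := ih'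
    refine ⟨q0 + q0', fun i => q i + q' i, fun σ => ?_, fun r0 i => ?_⟩
    · have : polyEval (p + p') σ = polyEval p σ + polyEval p' σ := by simp [polyEval]
      rw [this, sderiv_add, h1 σ, h1' σ]
      simp only [evalV_add, add_mul, Finset.sum_add_distrib]
      ring
    · simp [h2 r0 i, h2' r0 i]
  | mul_X p j ih =>
    obtain ⟨q0, q, h1, h2⟩ := ih
    induction j using Fin.cases with
    | zero =>
      refine ⟨q0 * MvPolynomial.X (Sum.inl ()) + pZero p,
        fun i => q i * MvPolynomial.X (Sum.inl ()), fun σ => ?_, fun r0 i => ?_⟩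
      · set r0 := fun i => PowerSeries.coeff 0 (σ i) with hr0
        have hpE : polyEval (p * MvPolynomial.X 0) σ = polyEval p σ * PowerSeries.X := by
          simp [polyEval]
        have hc : PowerSeries.C (coeff 0 (polyEval p σ)) = evalV (pZero p) r0 σ := by
          rw [evalV_pZero, coeff_zero_eq_constantCoeff, constCoeff_polyEval]
        rw [hpE, sderiv_mul, sderiv_X, h1 σ, hc]
        have hsum : ∑ i, evalV (q i) r0 σ * sderiv (σ i) * PowerSeries.X =
            ∑ i, evalV (q i) r0 σ * PowerSeries.X * sderiv (σ i) :=
          Finset.sum_congr rfl fun i _ => by ring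
        simp only [evalV_add, evalV_mul, evalV_Xx, add_mul, Finset.sum_mul, hsum, mul_one]
        rw [← hr0]
        ring
      · have hd : pderiv i.succ (p * MvPolynomial.X (0 : Fin (n+1))) =
            pderiv i.succ p * MvPolynomial.X 0 := by
          rw [pderiv_mul, pderiv_X_of_ne (Fin.succ_ne_zero i).symm]
          ring
        simp [hd]
    | succ i0 =>
      refine ⟨q0 * MvPolynomial.X (Sum.inr (Sum.inr i0)),
        fun i => q i * MvPolynomial.X (Sum.inr (Sum.inr i0)) +
          if i = i0 then pZero p else 0, fun σ => ?_, fun r0 i => ?_⟩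
      · set r0 := fun i => PowerSeries.coeff 0 (σ i) with hr0
        have hpE : polyEval (p * MvPolynomial.X i0.succ) σ = polyEval p σ * σ i0 := by
          simp [polyEval]
        have hc : PowerSeries.C (coeff 0 (polyEval p σ)) = evalV (pZero p) r0 σ := by
          rw [evalV_pZero, coeff_zero_eq_constantCoeff, constCoeff_polyEval]
        rw [hpE, sderiv_mul, h1 σ, hc]
        have hsplit : ∀ i, evalV (q i * MvPolynomial.X (Sum.inr (Sum.inr i0)) +
            if i = i0 then pZero p else 0) r0 σ =
            evalV (q i) r0 σ * σ i0 + if i = i0 then evalV (pZero p) r0 σ else 0 := by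
          intro i
          split <;> simp
        simp only [hsplit, evalV_mul, evalV_Xy, add_mul, Finset.sum_add_distrib, ite_mul,
          zero_mul, Finset.sum_ite_eq', Finset.mem_univ, if_true]
        have hsum : ∑ i, evalV (q i) r0 σ * sderiv (σ i) * σ i0 =
            ∑ i, evalV (q i) r0 σ * σ i0 * sderiv (σ i) :=
          Finset.sum_congr rfl fun i _ => by ring
        rw [Finset.sum_mul, hsum]
        ring
      · have hd : pderiv i.succ (p * MvPolynomial.X i0.succ) =
            pderiv i.succ p * MvPolynomial.X i0.succ +
              p * (if i0 = i then 1 else 0) := by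
          rw [pderiv_mul]
          congr 1
          congr 1
          classical
          rw [pderiv_X]
          simp [Pi.single_apply, Fin.succ_inj]
        by_cases h : i = i0
        · subst h
          simp [hd, h2 r0 i, evalVK_pZero]
        · simp [hd, h2 r0 i, Ne.symm h, h]
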